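/- Let V be a bounded operator on a Hilbert space H satisfying ‖Vk + h‖² ≤ 2(‖k‖² + ‖Vh‖²) for all h, k ∈ H. Then V is left-invertible and V is a hyponormal contraction. -/

import Mathlib

open ContinuousLinearMap Complex

variable {H : Type*} [NormedAddCommGroup H] [InnerProductSpace ℂ H] [CompleteSpace H]

set_option linter.unusedSectionVars false
set_option linter.unusedVariables false

private lemma quad_aux {R p q : ℝ} (hq : 0 ≤ q)
    (h : ∀ s t : ℝ, 2*(s*t*R) ≤ s^2*p + t^2*q) : R^2 ≤ p*q := by
  rcases eq_or_lt_of_le hq with hq0 | hq0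
  · have hR : R = 0 := by
      by_contra hR
      have h1 := h 1 ((p+1)/(2*R))
      rw [← hq0] at h1
      have : 2*(1*((p+1)/(2*R))*R) = p+1 := by field_simp
      rw [this] at h1
      nlinarith [h 1 0]
    have hp : 0 ≤ p := by nlinarith [h 1 0]
    rw [hR, ← hq0]; nlinarith
  · nlinarith [h q R, mul_pos hq0 hq0]

private lemma star_ineq (V : H →L[ℂ] H)
    (hyp : ∀ h k : H, ‖V k + h‖ ^ 2 ≤ 2 * (‖k‖ ^ 2 + ‖V h‖ ^ 2)) (h k : H) :
    (RCLike.re (inner ℂ (V k) h : ℂ))^2 ≤ (2*‖k‖^2 - ‖V k‖^2) * (2*‖V h‖^2 - ‖h‖^2) := by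
  have hq : 0 ≤ 2*‖V h‖^2 - ‖h‖^2 := by
    have := hyp h 0; simp at this; nlinarith
  apply quad_aux hq
  intro s t
  have H1 := hyp ((t:ℂ) • h) ((s:ℂ) • k)
  rw [map_smul, map_smul] at H1
  rw [norm_add_sq (𝕜 := ℂ)] at H1
  rw [inner_smul_left, inner_smul_right] at H1
  have e1 : (starRingEnd ℂ) (s:ℂ) * ((t:ℂ) * inner ℂ (V k) h) = ((s*t:ℝ):ℂ) * inner ℂ (V k) h := by
    rw [Complex.conj_ofReal]; push_cast; ring
  rw [e1] at H1
  rw [show ((s*t:ℝ):ℂ) * inner ℂ (V k) h = (s*t) • (inner ℂ (V k) h : ℂ) by simp [Complex.real_smul]] at H1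
  rw [RCLike.smul_re] at H1
  simp only [norm_smul, Complex.norm_real, mul_pow, Real.norm_eq_abs] at H1
  simp only [_root_.sq_abs] at H1
  nlinarith [H1]

private lemma step_aux {a m b nr : ℝ} (ha : 0 ≤ a) (hm : 0 ≤ m)
    (hst : a^2 ≤ (2*m - a)*(2*b - a)) (h2 : (nr+1)*b ≤ (nr+2)*a)
    (hp : 0 ≤ 2*m - a) (hn : 0 ≤ nr) : (nr+2)*a ≤ (nr+3)*m := by
  have e1 : (nr+1)*(2*b-a) ≤ (nr+3)*a := by nlinarith
  have e2 : (2*m-a)*((nr+1)*(2*b-a)) ≤ (2*m-a)*((nr+3)*a) :=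
    mul_le_mul_of_nonneg_left e1 hp
  have e3 : (nr+1)*a^2 ≤ (nr+1)*((2*m - a)*(2*b - a)) :=
    mul_le_mul_of_nonneg_left hst (by linarith)
  have e4 : (nr+1)*a^2 ≤ (2*m-a)*((nr+3)*a) := by nlinarith
  rcases eq_or_lt_of_le ha with h0 | h0
  · nlinarith
  · nlinarith [mul_pos h0 h0]

private lemma contract (V : H →L[ℂ] H)
    (hyp : ∀ h k : H, ‖V k + h‖ ^ 2 ≤ 2 * (‖k‖ ^ 2 + ‖V h‖ ^ 2)) (x : H) :
    ‖V x‖ ≤ ‖x‖ := by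
  have base : ∀ y : H, ‖V y‖^2 ≤ 2*‖y‖^2 := by
    intro y; have := hyp 0 y; simp at this; nlinarith
  have key : ∀ n : ℕ, ∀ y : H, (n+1 : ℝ) * ‖V y‖^2 ≤ (n+2 : ℝ) * ‖y‖^2 := by
    intro n
    induction n with
    | zero => intro y; have := base y; norm_num; linarith
    | succ n ih =>
      intro y
      have hst := star_ineq V hyp (V y) y
      rw [inner_self_eq_norm_sq (𝕜 := ℂ)] at hst
      have h2 := ih (V y)
      have hp : 0 ≤ 2*‖y‖^2 - ‖V y‖^2 := by nlinarith [base y]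
      push_cast
      have := step_aux (sq_nonneg ‖V y‖) (sq_nonneg ‖y‖)
        (by nlinarith [hst]) h2 hp (Nat.cast_nonneg n)
      linarith
  by_contra hcon
  push_neg at hcon
  have hma : ‖x‖^2 < ‖V x‖^2 := by nlinarith [norm_nonneg x, norm_nonneg (V x)]
  have hδ : (0:ℝ) < ‖V x‖^2 - ‖x‖^2 := by linarith
  obtain ⟨n, hn⟩ := exists_nat_gt (‖x‖^2 / (‖V x‖^2 - ‖x‖^2))
  have hn' : ‖x‖^2 < n * (‖V x‖^2 - ‖x‖^2) := by rwa [div_lt_iff₀ hδ] at hn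
  have hkey := key n x
  nlinarith [hkey, hn', hma]

private lemma expand_sq (u v : H) (s t : ℝ) :
    ‖(s:ℂ)•u + (t:ℂ)•v‖^2
      = s^2*‖u‖^2 + 2*(s*t*RCLike.re (inner ℂ u v : ℂ)) + t^2*‖v‖^2 := by
  rw [norm_add_sq (𝕜 := ℂ), inner_smul_left, inner_smul_right]
  have e1 : (starRingEnd ℂ) (s:ℂ) * ((t:ℂ) * inner ℂ u v) = ((s*t:ℝ):ℂ) * inner ℂ u v := by
    rw [Complex.conj_ofReal]; push_cast; ring
  rw [e1, show ((s*t:ℝ):ℂ) * inner ℂ u v = (s*t) • (inner ℂ u v : ℂ) by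
    simp [Complex.real_smul], RCLike.smul_re]
  simp only [norm_smul, Complex.norm_real, mul_pow, Real.norm_eq_abs, _root_.sq_abs]

set_option maxHeartbeats 1000000 in
/-- If ‖Vk + h‖² ≤ 2(‖k‖² + ‖Vh‖²) for all h, k, then V is left-invertible
and a hyponormal contraction. -/
theorem stmt18 (V : H →L[ℂ] H)
    (hyp : ∀ h k : H, ‖V k + h‖ ^ 2 ≤ 2 * (‖k‖ ^ 2 + ‖V h‖ ^ 2)) :
    (∃ L : H →L[ℂ] H, L ∘L V = 1) ∧
    (∀ h : H, ‖adjoint V h‖ ≤ ‖V h‖) ∧ ‖V‖ ≤ 1 := by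
  have base2 : ∀ h : H, ‖h‖^2 ≤ 2*‖V h‖^2 := by
    intro h; have := hyp h 0; simp at this; nlinarith
  have hC : ∀ x : H, ‖V x‖ ≤ ‖x‖ := contract V hyp
  have hV1 : ‖V‖ ≤ 1 := opNorm_le_bound V zero_le_one (fun x => by simpa using hC x)
  have hCs : ∀ u : H, ‖adjoint V u‖ ≤ ‖u‖ := by
    intro u
    calc ‖adjoint V u‖ ≤ ‖adjoint V‖ * ‖u‖ := le_opNorm _ u
    _ ≤ 1 * ‖u‖ := by
        apply mul_le_mul_of_nonneg_right _ (norm_nonneg u)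
        rw [LinearIsometryEquiv.norm_map]; exact hV1
    _ = ‖u‖ := one_mul _
  -- Left inverse
  have hleft : ∃ L : H →L[ℂ] H, L ∘L V = 1 := by
    set A : H →L[ℂ] H := adjoint V ∘L V with hA
    have h1A : ∀ x : H, ‖(1 - A) x‖ ≤ (4/5 : ℝ) * ‖x‖ := by
      intro x
      have e0 : (1 - A) x = x - adjoint V (V x) := by
        simp [hA, sub_apply]
      have e1 : ‖x - adjoint V (V x)‖^2
          = ‖x‖^2 - 2*‖V x‖^2 + ‖adjoint V (V x)‖^2 := by
        rw [norm_sub_sq (𝕜 := ℂ)]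
        have e2 : (inner ℂ x (adjoint V (V x)) : ℂ) = inner ℂ (V x) (V x) :=
          adjoint_inner_right V x (V x)
        rw [e2, inner_self_eq_norm_sq (𝕜 := ℂ)]
      rw [e0]
      have h3 : ‖adjoint V (V x)‖ ≤ ‖V x‖ := hCs (V x)
      have h4 : ‖x - adjoint V (V x)‖^2 ≤ (4/5)^2 * ‖x‖^2 := by
        rw [e1]; nlinarith [base2 x, pow_le_pow_left₀ (norm_nonneg _) h3 2, sq_nonneg ‖x‖]
      nlinarith [norm_nonneg (x - adjoint V (V x)), norm_nonneg x,
        mul_nonneg (by norm_num : (0:ℝ) ≤ 4/5) (norm_nonneg x)]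
    have hlt : ‖(1 : H →L[ℂ] H) - A‖ < 1 :=
      lt_of_le_of_lt (opNorm_le_bound _ (by norm_num) h1A) (by norm_num)
    let u : (H →L[ℂ] H)ˣ := Units.oneSub (1 - A) hlt
    refine ⟨(↑u⁻¹ : H →L[ℂ] H) ∘L adjoint V, ?_⟩
    have hval : (u : H →L[ℂ] H) = A := by
      show (1 : H →L[ℂ] H) - (1 - A) = A
      rw [sub_sub_cancel]
    have := u.inv_mul
    rw [hval] at this
    calc ((↑u⁻¹ : H →L[ℂ] H) ∘L adjoint V) ∘L V
        = (↑u⁻¹ : H →L[ℂ] H) ∘L A := by rw [comp_assoc, ← hA]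
      _ = 1 := this
  refine ⟨hleft, ?_, hV1⟩
  intro h
  set X : H →L[ℂ] H := V ∘L adjoint V with hX
  have hXb : ∀ w : H, ‖X w‖ ≤ ‖w‖ := by
    intro w
    calc ‖X w‖ = ‖V (adjoint V w)‖ := by rw [hX]; rfl
      _ ≤ ‖adjoint V w‖ := hC _
      _ ≤ ‖w‖ := hCs w
  have hXn : ‖(2:ℂ)⁻¹ • X‖ < 1 := by
    have h1 : ‖(2:ℂ)⁻¹ • X‖ ≤ (2:ℝ)⁻¹ * 1 := by
      rw [norm_smul]
      apply mul_le_mul_of_nonneg_left (opNorm_le_bound _ zero_le_one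
        (fun w => by simpa using hXb w)) (norm_nonneg _) |>.trans
      simp
    calc ‖(2:ℂ)⁻¹ • X‖ ≤ (2:ℝ)⁻¹ * 1 := h1
      _ < 1 := by norm_num
  set u : (H →L[ℂ] H)ˣ := Units.oneSub ((2:ℂ)⁻¹ • X) hXn with hu
  set w : H := (↑u⁻¹ : H →L[ℂ] H) h with hw
  set y : H := (2:ℂ)⁻¹ • w with hy
  -- identity: w - 2⁻¹ • X w = h
  have f0 : w - (2:ℂ)⁻¹ • X w = h := by
    have h1 : ((1 - (2:ℂ)⁻¹ • X) * (↑u⁻¹ : H →L[ℂ] H)) h = (1 : H →L[ℂ] H) h := by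
      rw [show ((1 - (2:ℂ)⁻¹ • X) : H →L[ℂ] H) = ↑u from rfl, u.mul_inv]
    simpa [mul_apply, sub_apply, smul_apply, hw] using h1
  have f1 : X y = (2:ℂ) • y - h := by
    rw [hy, map_smul]
    rw [smul_smul]
    norm_num
    rw [← f0]
    module
  set z : H := adjoint V y with hz
  have hXy : X y = V (adjoint V y) := rfl
  have fVz : V z = (2:ℂ) • y - h := by rw [hz, ← hXy, f1]
  have f2 : adjoint V h = (2:ℂ) • z - adjoint V (V z) := by
    rw [fVz, map_sub, map_smul, hz]
    module
  clear_value u w y z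
  clear f0 f1 hXy hw hy hu
  -- f2 : adjoint V h = 2•z - V*(Vz)
  -- f3 : re ⟪V z, h⟫ = 2‖z‖² - ‖Vz‖²
  have f3 : RCLike.re (inner ℂ (V z) h : ℂ) = 2*‖z‖^2 - ‖V z‖^2 := by
    rw [← adjoint_inner_right V z h, f2, inner_sub_right, inner_smul_right,
      adjoint_inner_right V z (V z), inner_self_eq_norm_sq_to_K (𝕜 := ℂ) z,
      inner_self_eq_norm_sq_to_K (𝕜 := ℂ) (V z)]
    simp [← Complex.ofReal_pow, Complex.ofReal_re]
  -- f4 : s ≤ 2‖Vh‖² - ‖h‖²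
  have hs0 : 0 ≤ 2*‖z‖^2 - ‖V z‖^2 := by nlinarith [hC z, norm_nonneg z, norm_nonneg (V z)]
  have hq0 : 0 ≤ 2*‖V h‖^2 - ‖h‖^2 := by nlinarith [base2 h]
  have f4 : 2*‖z‖^2 - ‖V z‖^2 ≤ 2*‖V h‖^2 - ‖h‖^2 := by
    have := star_ineq V hyp h z
    rw [f3] at this
    rcases eq_or_lt_of_le hs0 with h0 | h0
    · rw [← h0]; exact hq0
    · nlinarith
  -- f5 : re ⟪y, h⟫ ≤ ‖Vh‖²
  have f3e : RCLike.re (inner ℂ (V z) h : ℂ)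
      = 2 * RCLike.re (inner ℂ y h : ℂ) - ‖h‖^2 := by
    rw [fVz, inner_sub_left, inner_smul_left, inner_self_eq_norm_sq_to_K (𝕜 := ℂ) h]
    simp [← Complex.ofReal_pow, Complex.ofReal_re]
  have f5 : RCLike.re (inner ℂ y h : ℂ) ≤ ‖V h‖^2 := by
    rw [f3e] at f3
    linarith [f3, f4]
  -- Cauchy-Schwarz for the positive form 2 re ⟪u,v⟫ - re ⟪V*u, V*v⟫
  have hbm : ‖adjoint V h‖^2 ≤ ‖h‖^2 := pow_le_pow_left₀ (norm_nonneg _) (hCs h) 2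
  have hposq : 0 ≤ 2*‖h‖^2 - ‖adjoint V h‖^2 := by
    have := sq_nonneg ‖h‖
    linarith
  have hpos : ∀ s t : ℝ, 0 ≤ s^2*(2*‖y‖^2 - ‖z‖^2)
      + 2*(s*t*(2*RCLike.re (inner ℂ y h : ℂ) - RCLike.re (inner ℂ z (adjoint V h) : ℂ)))
      + t^2*(2*‖h‖^2 - ‖adjoint V h‖^2) := by
    intro s t
    have hv := hCs ((s:ℂ)•y + (t:ℂ)•h)
    have hv2 : ‖adjoint V ((s:ℂ)•y + (t:ℂ)•h)‖^2 ≤ ‖(s:ℂ)•y + (t:ℂ)•h‖^2 :=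
      pow_le_pow_left₀ (norm_nonneg _) hv 2
    have eA : adjoint V ((s:ℂ)•y + (t:ℂ)•h) = (s:ℂ)•z + (t:ℂ)•(adjoint V h) := by
      rw [map_add, map_smul, map_smul, ← hz]
    rw [eA] at hv2
    have e1 := expand_sq y h s t
    have e2 := expand_sq z (adjoint V h) s t
    rw [e1, e2] at hv2
    nlinarith [hv2]
  have hRh : 2*RCLike.re (inner ℂ y h : ℂ) - RCLike.re (inner ℂ z (adjoint V h) : ℂ)
      = ‖h‖^2 := by
    rw [adjoint_inner_right V z h, f3e]
    ring
  have hpy : 2*‖y‖^2 - ‖z‖^2 = RCLike.re (inner ℂ y h : ℂ) := by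
    have ez : (inner ℂ z z : ℂ) = inner ℂ (V z) y := by
      nth_rewrite 2 [hz]
      exact adjoint_inner_right V z y
    have ez2 : RCLike.re (inner ℂ z z : ℂ) = ‖z‖^2 := inner_self_eq_norm_sq (𝕜 := ℂ) z
    have ez3 : RCLike.re (inner ℂ (V z) y : ℂ)
        = 2*‖y‖^2 - RCLike.re (inner ℂ h y : ℂ) := by
      rw [fVz, inner_sub_left, inner_smul_left, inner_self_eq_norm_sq_to_K (𝕜 := ℂ) y]
      simp [← Complex.ofReal_pow, Complex.ofReal_re]
    have ez4 : RCLike.re (inner ℂ h y : ℂ) = RCLike.re (inner ℂ y h : ℂ) :=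
      inner_re_symm (𝕜 := ℂ) h y
    rw [← ez2, ez, ez3, ez4]
    ring
  have f6 : (‖h‖^2)^2 ≤ RCLike.re (inner ℂ y h : ℂ) * (2*‖h‖^2 - ‖adjoint V h‖^2) := by
    have hq2 : ∀ s t : ℝ, 2*(s*t*(2*RCLike.re (inner ℂ y h : ℂ)
        - RCLike.re (inner ℂ z (adjoint V h) : ℂ)))
        ≤ s^2*(2*‖y‖^2 - ‖z‖^2) + t^2*(2*‖h‖^2 - ‖adjoint V h‖^2) := by
      intro s t
      nlinarith [hpos (-s) t]
    have := quad_aux hposq hq2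
    rw [hRh, hpy] at this
    exact this
  -- conclude
  have key1 : (‖h‖^2)^2 ≤ ‖V h‖^2 * (2*‖h‖^2 - ‖adjoint V h‖^2) :=
    f6.trans (mul_le_mul_of_nonneg_right f5 hposq)
  have hba : ‖adjoint V h‖^2 ≤ ‖V h‖^2 := by
    rcases eq_or_lt_of_le (sq_nonneg ‖V h‖) with h0 | h0
    · have hm0 : ‖h‖^2 ≤ 0 := by nlinarith [base2 h]
      nlinarith [hbm]
    · nlinarith [sq_nonneg (‖V h‖^2 - ‖h‖^2), key1, h0]
  nlinarith [hba, norm_nonneg (adjoint V h), norm_nonneg (V h)]
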